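/- Let ḡ(z) = conj(g(conj z)) = √(a+i)·(−i·a·c/z + 1). Then: (i) for every z ∈ ℂ with z ∉ {0, b, −c}, f(z)·ḡ(z) = −(a²+1)·(z² + bc)/(z(z+c)(z−b)); in particular f·ḡ is a rational function with real coefficients. (ii) Consequently, for every continuously differentiable path γ : [0,1] → ℂ∖{0, b, −c} satisfying γ(1−t) = conj(γ(t)) for all t ∈ [0,1], the number (1/(2πi)) ∫₀¹ f(γ(t))·ḡ(γ(t))·γ'(t) dt is real. -/

import Mathlib

open Complex Real MeasureTheory

/-- With `b, c > 0`, `a = √(b/c)`, `f(z) = √(a+i)·(i/(z+c) − a/(z−b))` and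
`ḡ(z) = conj (g (conj z)) = √(a+i)·(−iac/z + 1)`:
(i) `f(z)·ḡ(z) = −(a²+1)·(z² + bc)/(z(z+c)(z−b))`, a rational function with real
coefficients; (ii) consequently, for every C¹ path `γ : [0,1] → ℂ∖{0, b, −c}` with
`γ(1−t) = conj (γ t)`, the number `(1/(2πi)) ∫₀¹ f(γ t)·ḡ(γ t)·γ'(t) dt` is real. -/
theorem stmt13 (b c : ℝ) (hb : 0 < b) (hc : 0 < c) (a : ℝ) (ha : a = Real.sqrt (b / c))
    (f gbar : ℂ → ℂ)
    (hf : ∀ z : ℂ, f z = ((a : ℂ) + I) ^ ((1 : ℂ) / 2) * (I / (z + (c : ℂ)) - (a : ℂ) / (z - (b : ℂ))))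
    (hgbar : ∀ z : ℂ, gbar z = ((a : ℂ) + I) ^ ((1 : ℂ) / 2) * (-(I * (a : ℂ) * (c : ℂ) / z) + 1)) :
    (∀ z : ℂ, z ≠ 0 → z ≠ (b : ℂ) → z ≠ -(c : ℂ) →
      f z * gbar z
        = -((a : ℂ) ^ 2 + 1) * (z ^ 2 + (b : ℂ) * (c : ℂ)) / (z * (z + (c : ℂ)) * (z - (b : ℂ)))) ∧
    (∀ γ γ' : ℝ → ℂ,
      (∀ t ∈ Set.Icc (0 : ℝ) 1, HasDerivAt γ (γ' t) t) →
      ContinuousOn γ' (Set.Icc (0 : ℝ) 1) →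
      (∀ t ∈ Set.Icc (0 : ℝ) 1, γ t ≠ 0 ∧ γ t ≠ (b : ℂ) ∧ γ t ≠ -(c : ℂ)) →
      (∀ t ∈ Set.Icc (0 : ℝ) 1, γ (1 - t) = (starRingEnd ℂ) (γ t)) →
      ((1 / (2 * (Real.pi : ℂ) * I)) * ∫ t in (0 : ℝ)..1, f (γ t) * gbar (γ t) * γ' t).im = 0) := by
  -- the rational function
  set R : ℂ → ℂ := fun z =>
    -((a : ℂ) ^ 2 + 1) * (z ^ 2 + (b : ℂ) * (c : ℂ)) / (z * (z + (c : ℂ)) * (z - (b : ℂ))) with hR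
  -- Part (i)
  have part1 : ∀ z : ℂ, z ≠ 0 → z ≠ (b : ℂ) → z ≠ -(c : ℂ) → f z * gbar z = R z := by
    intro z h0 h1 h2
    rw [hf, hgbar]
    have hane : ((a:ℂ) + I) ≠ 0 := by simp [Complex.ext_iff]
    have hsq : ((a : ℂ) + I) ^ ((1 : ℂ) / 2) * ((a : ℂ) + I) ^ ((1 : ℂ) / 2) = (a:ℂ) + I := by
      rw [← Complex.cpow_add _ _ hane]; norm_num
    have ha2 : (a:ℂ)^2 * (c:ℂ) = (b:ℂ) := by
      have h : (a:ℝ)^2 * c = b := by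
        rw [ha, Real.sq_sqrt (by positivity)]; field_simp
      exact_mod_cast h
    have hzc : z + (c:ℂ) ≠ 0 := fun h => h2 (by linear_combination h)
    have hzb : z - (b:ℂ) ≠ 0 := sub_ne_zero.mpr h1
    have key : (I*(z-(b:ℂ)) - (a:ℂ)*(z+(c:ℂ))) * (z - I*(a:ℂ)*(c:ℂ))
        = (I - (a:ℂ))*(z^2 + (b:ℂ)*(c:ℂ)) := by
      linear_combination (I*(z+(c:ℂ)))*ha2 + ((a:ℂ)*(c:ℂ)*((b:ℂ)-z))*Complex.I_sq
    have key2 : ((a:ℂ)+I)*(I-(a:ℂ)) = -((a:ℂ)^2+1) := by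
      linear_combination Complex.I_sq
    have expand : (I / (z + (c:ℂ)) - (a:ℂ) / (z - (b:ℂ))) * (-(I * (a:ℂ) * (c:ℂ) / z) + 1)
        = ((I*(z-(b:ℂ)) - (a:ℂ)*(z+(c:ℂ))) * (z - I*(a:ℂ)*(c:ℂ))) / ((z+(c:ℂ))*(z-(b:ℂ))*z) := by
      field_simp; ring
    simp only [hR]
    rw [mul_mul_mul_comm, hsq, expand, key, mul_div_assoc, ← mul_assoc, key2]
    ring_nf
  refine ⟨part1, ?_⟩
  -- Part (ii)
  intro γ γ' hd hcont hγ hsym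
  -- R commutes with conjugation
  have hconj : ∀ z : ℂ, (starRingEnd ℂ) (R z) = R ((starRingEnd ℂ) z) := by
    intro z
    simp only [hR, map_div₀, map_mul, map_neg, map_one, map_add, map_sub, map_pow,
      Complex.conj_ofReal]
  -- derivative symmetry
  have hder : ∀ t ∈ Set.Ioo (0:ℝ) 1, γ' (1 - t) = -(starRingEnd ℂ) (γ' t) := by
    intro t ht
    have ht1 : (1 - t) ∈ Set.Icc (0:ℝ) 1 := ⟨by linarith [ht.2], by linarith [ht.1]⟩
    have htI : t ∈ Set.Icc (0:ℝ) 1 := ⟨ht.1.le, ht.2.le⟩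
    have hinner : HasDerivAt (fun s : ℝ => 1 - s) (-1 : ℝ) t := by
      exact (hasDerivAt_id t).const_sub (1:ℝ)
    have h1 : HasDerivAt (fun s => γ (1 - s)) ((-1 : ℝ) • γ' (1 - t)) t :=
      (hd (1 - t) ht1).scomp t hinner
    have h2 : HasDerivAt (fun s => (starRingEnd ℂ) (γ s)) ((starRingEnd ℂ) (γ' t)) t :=
      (hd t htI).star
    have heq : (fun s => γ (1 - s)) =ᶠ[nhds t] fun s => (starRingEnd ℂ) (γ s) := by
      filter_upwards [Ioo_mem_nhds ht.1 ht.2] with s hs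
      exact hsym s ⟨hs.1.le, hs.2.le⟩
    have h1' : HasDerivAt (fun s => (starRingEnd ℂ) (γ s)) ((-1 : ℝ) • γ' (1 - t)) t :=
      h1.congr_of_eventuallyEq heq.symm
    have h3 := h1'.unique h2
    simp only [neg_one_smul] at h3
    linear_combination -h3
  -- ae congruence helper
  have hae : ∀ G H : ℝ → ℂ, (∀ t ∈ Set.Ioo (0:ℝ) 1, G t = H t) →
      ∫ t in (0:ℝ)..1, G t = ∫ t in (0:ℝ)..1, H t := by
    intro G H h
    apply intervalIntegral.integral_congr_ae
    have h1 : ∀ᵐ t : ℝ ∂volume, t ≠ 1 := by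
      simpa [ae_iff] using Real.volume_singleton (a := (1:ℝ))
    filter_upwards [h1] with t ht htI
    rw [Set.uIoc_of_le (by norm_num : (0:ℝ) ≤ 1)] at htI
    exact h t ⟨htI.1, lt_of_le_of_ne htI.2 ht⟩
  set F : ℝ → ℂ := fun t => R (γ t) * γ' t with hF
  -- the displayed integral equals ∫ F
  have hIF : (∫ t in (0:ℝ)..1, f (γ t) * gbar (γ t) * γ' t) = ∫ t in (0:ℝ)..1, F t := by
    apply hae
    intro t ht
    have htI : t ∈ Set.Icc (0:ℝ) 1 := ⟨ht.1.le, ht.2.le⟩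
    obtain ⟨h0, h1, h2⟩ := hγ t htI
    rw [hF, part1 (γ t) h0 h1 h2]
  -- symmetry of the integral
  have hsymF : ∀ t ∈ Set.Ioo (0:ℝ) 1, F (1 - t) = -(starRingEnd ℂ) (F t) := by
    intro t ht
    have htI : t ∈ Set.Icc (0:ℝ) 1 := ⟨ht.1.le, ht.2.le⟩
    rw [hF]
    simp only
    rw [hsym t htI, hder t ht, ← hconj, map_mul]
    ring
  have hflip : (∫ t in (0:ℝ)..1, F t) = ∫ t in (0:ℝ)..1, F (1 - t) := by
    have := intervalIntegral.integral_comp_sub_left F 1 (a := (0:ℝ)) (b := (1:ℝ))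
    simpa using this.symm
  have hconjint : ∫ t in (0:ℝ)..1, (starRingEnd ℂ) (F t)
      = (starRingEnd ℂ) (∫ t in (0:ℝ)..1, F t) := by
    simp only [intervalIntegral, ← integral_conj, map_sub]
  have hkey : (∫ t in (0:ℝ)..1, F t) = -(starRingEnd ℂ) (∫ t in (0:ℝ)..1, F t) := by
    calc (∫ t in (0:ℝ)..1, F t) = ∫ t in (0:ℝ)..1, F (1 - t) := hflip
      _ = ∫ t in (0:ℝ)..1, -(starRingEnd ℂ) (F t) := hae _ _ hsymF
      _ = -∫ t in (0:ℝ)..1, (starRingEnd ℂ) (F t) := intervalIntegral.integral_neg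
      _ = -(starRingEnd ℂ) (∫ t in (0:ℝ)..1, F t) := by rw [hconjint]
  have hre : (∫ t in (0:ℝ)..1, F t).re = 0 := by
    have := congrArg Complex.re hkey
    simp only [Complex.neg_re, Complex.conj_re] at this
    linarith
  rw [hIF]
  simp [Complex.div_im, Complex.div_re, Complex.mul_im, Complex.mul_re, hre]
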